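/- Let C be a cycle and let M be a graph on V(C) whose edge set consists of E(C) together with chords forming a complete bipartite configuration between two disjoint arcs A and B of C (with all chords having one end in A and one in B). Then K₇ cannot be obtained from M by contracting edges of C. -/

import Mathlib

open List

namespace NoK7Aux

variable {V : Type*}

/-- `u` is immediately followed by `w` in the cyclic order of the list `l`. -/
def CSucc (l : List V) (u w : V) : Prop :=
  ∃ (k : ℕ) (h : k < l.length), u = l[k] ∧
    w = l[(k + 1) % l.length]'(Nat.mod_lt _ (Nat.zero_lt_of_lt h))

lemma getElem_congr_idx {l : List V} {i j : ℕ} (h : i = j) {hi : i < l.length} :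
    l[i] = l[j]'(h ▸ hi) := by cases h; rfl

lemma csucc_rotate {l : List V} {r : ℕ} {u w : V} (h : CSucc (l.rotate r) u w) :
    CSucc l u w := by
  obtain ⟨k, hk, hu, hw⟩ := h
  have hn : 0 < l.length := by
    have := Nat.zero_lt_of_lt hk; simpa [List.length_rotate] using this
  rw [List.getElem_rotate] at hu hw
  refine ⟨(k + r) % l.length, Nat.mod_lt _ hn, hu, ?_⟩
  rw [hw]
  exact getElem_congr_idx (by
    rw [List.length_rotate, Nat.mod_add_mod, Nat.mod_add_mod, Nat.add_right_comm])

lemma csucc_rotate' {l : List V} (r : ℕ) {u w : V} (h : CSucc l u w) :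
    CSucc (l.rotate r) u w := by
  have hn : 0 < l.length := by
    obtain ⟨k, hk, -, -⟩ := h; exact Nat.zero_lt_of_lt hk
  have key : (l.rotate r).rotate (l.length - r % l.length) = l := by
    rw [List.rotate_rotate]
    have h2 := Nat.div_add_mod r l.length
    have h3 : r % l.length < l.length := Nat.mod_lt _ hn
    have h1 : r + (l.length - r % l.length) = l.length * (r / l.length) + l.length := by
      omega
    rw [h1, ← Nat.mul_succ, List.rotate_length_mul]
  apply csucc_rotate (r := l.length - r % l.length)
  rwa [key]

lemma dart_csucc {M : SimpleGraph V} {v : V} (C : M.Walk v v) (d : M.Dart)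
    (hd : d ∈ C.darts) : CSucc C.support.tail d.toProd.1 d.toProd.2 := by
  obtain ⟨k, hk, hke⟩ := List.getElem_of_mem hd
  have hlen : C.support.tail.length = C.length := by
    simp [SimpleGraph.Walk.length_support]
  have hkl : k < C.length := by
    have := hk; rwa [SimpleGraph.Walk.length_darts] at this
  have hsup : C.support = v :: C.support.tail := C.support_eq_cons
  have h2 : d.toProd.2 = C.support.tail[k]'(by omega) := by
    have hmap := SimpleGraph.Walk.map_snd_darts C
    have : (C.darts.map (fun d => d.toProd.2))[k]'(by simpa using hk) =
        C.support.tail[k]'(by omega) := List.getElem_of_eq hmap _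
    rw [← this, List.getElem_map, hke]
  have h1 : d.toProd.1 = C.support[k]'(by
      rw [SimpleGraph.Walk.length_support]; omega) := by
    have hmap := SimpleGraph.Walk.map_fst_darts C
    have hd1 : (C.darts.map (fun d => d.toProd.1))[k]'(by simpa using hk) =
        C.support.dropLast[k]'(by
          simp [List.length_dropLast, SimpleGraph.Walk.length_support]; omega) :=
      List.getElem_of_eq hmap _
    rw [List.getElem_map, hke, List.getElem_dropLast] at hd1
    exact hd1
  rcases Nat.eq_zero_or_pos k with rfl | hkpos
  · -- dart from v = last vertex of tail to tail[0]
    have hne : C.support.tail ≠ [] := by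
      intro hcon
      rw [hcon] at hlen
      simp at hlen
      omega
    have hv : d.toProd.1 = v := by
      rw [h1, List.getElem_zero]
      exact SimpleGraph.Walk.head_support C
    have hlast : C.support.tail.getLast hne = v := by
      rw [List.getLast_tail]
      exact SimpleGraph.Walk.getLast_support C
    have hlast' : C.support.tail[C.support.tail.length - 1]'(by omega) = v :=
      (List.getLast_eq_getElem hne).symm.trans hlast
    refine ⟨C.support.tail.length - 1, by omega, ?_, ?_⟩
    · exact hv.trans hlast'.symm
    · have : (C.support.tail.length - 1 + 1) % C.support.tail.length = 0 := by
        have : C.support.tail.length - 1 + 1 = C.support.tail.length := by omega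
        rw [this, Nat.mod_self]
      rw [h2]
      exact (getElem_congr_idx (l := C.support.tail) this.symm)
  · obtain ⟨j, rfl⟩ : ∃ j, k = j + 1 := ⟨k - 1, by omega⟩
    refine ⟨j, by omega, ?_, ?_⟩
    · rw [h1]
      exact (List.getElem_of_eq hsup _).trans (List.getElem_cons_succ ..)
    · rw [h2]
      exact getElem_congr_idx (by rw [Nat.mod_eq_of_lt]; omega)

lemma edge_csucc {M : SimpleGraph V} {v : V} {C : M.Walk v v} {u w : V}
    (h : s(u, w) ∈ C.edges) :
    CSucc C.support.tail u w ∨ CSucc C.support.tail w u := by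
  rw [SimpleGraph.Walk.edges, List.mem_map] at h
  obtain ⟨d, hd, he⟩ := h
  have key : CSucc C.support.tail d.toProd.1 d.toProd.2 := dart_csucc C d hd
  have he' : s(d.toProd.1, d.toProd.2) = s(u, w) := he
  rw [Sym2.eq_iff] at he'
  rcases he' with ⟨h1, h2⟩ | ⟨h1, h2⟩
  · left; rwa [h1, h2] at key
  · right; rwa [h1, h2] at key

lemma getElem_mem_take_iff {l : List V} (hl : l.Nodup) {a k : ℕ} (hk : k < l.length) :
    l[k] ∈ l.take a ↔ k < a := by
  constructor
  · intro h
    obtain ⟨j, hj, hje⟩ := List.getElem_of_mem h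
    have hj' : j < a := by
      have := hj; rw [List.length_take] at this; omega
    have hjl : j < l.length := by
      have := hj; rw [List.length_take] at this; omega
    rw [List.getElem_take] at hje
    have hinj := List.nodup_iff_injective_getElem.mp hl
    have hjk : (⟨j, hjl⟩ : Fin l.length) = ⟨k, hk⟩ := hinj hje
    have : j = k := by simpa [Fin.ext_iff] using hjk
    omega
  · intro h
    have : l[k] = (l.take a)[k]'(by rw [List.length_take]; omega) :=
      List.getElem_take.symm
    rw [this]
    exact List.getElem_mem _

lemma exit_aux {l : List V} (X : V → Prop) :
    ∀ (d p : ℕ) (hpd : p + d < l.length), X (l[p]'(by omega)) → ¬ X (l[p + d]'hpd) →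
      ∃ k, p ≤ k ∧ k + 1 ≤ p + d ∧ ∃ (hk1 : k < l.length) (hk2 : k + 1 < l.length),
        X l[k] ∧ ¬ X l[k + 1] := by
  intro d
  induction d with
  | zero => intro p hpd h1 h2; exact absurd h1 h2
  | succ d ih =>
    intro p hpd h1 h2
    by_cases hmid : X (l[p + d]'(by omega))
    · exact ⟨p + d, by omega, by omega, by omega, by omega, hmid, h2⟩
    · obtain ⟨k, hk1, hk2, hk3, hk4, hk5, hk6⟩ := ih p (by omega) h1 hmid
      exact ⟨k, hk1, by omega, hk3, hk4, hk5, hk6⟩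

lemma triple_exists : ∀ a b : Fin 7, ∃ i j k : Fin 7,
    ((i : ℕ) + 1 < (j : ℕ) ∧ ¬((i : ℕ) = 0 ∧ (j : ℕ) = 6)) ∧
    ((i : ℕ) + 1 < (k : ℕ) ∧ ¬((i : ℕ) = 0 ∧ (k : ℕ) = 6)) ∧
    ((j : ℕ) + 1 < (k : ℕ) ∧ ¬((j : ℕ) = 0 ∧ (k : ℕ) = 6)) ∧
    i ≠ a ∧ i ≠ b ∧ j ≠ a ∧ j ≠ b ∧ k ≠ a ∧ k ≠ b := by decide

end NoK7Aux

set_option maxHeartbeats 1600000 in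
open NoK7Aux in
/-- Let `C` be a (Hamiltonian) cycle of a graph `M` whose chords form a complete
bipartite configuration between two disjoint arcs `A` and `B` of `C` (every chord has
one end in `A` and the other in `B`). Then `K₇` cannot be obtained from `M` by
contracting edges of `C`: there is no partition of `V(C)` into 7 classes, each inducing
a subpath of `C` (the classes appear as consecutive blocks along a rotation of the
cyclic order of `C`), with every two distinct classes joined by an edge of `M`. -/
theorem no_cyclic_K7_in_bipartite_configuration {V : Type*} [Fintype V] [DecidableEq V]
    (M : SimpleGraph V) {v : V} (C : M.Walk v v) (hC : C.IsHamiltonianCycle)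
    (A B : Finset V) (hAB : Disjoint A B)
    (hA : ∃ r : ℕ, ((C.support.tail.rotate r).take A.card).toFinset = A)
    (hB : ∃ r : ℕ, ((C.support.tail.rotate r).take B.card).toFinset = B)
    (hchord : ∀ u w : V, M.Adj u w → s(u, w) ∉ C.edges →
      ((u ∈ A ∧ w ∈ B) ∨ (u ∈ B ∧ w ∈ A))) :
    ¬ ∃ (f : V → Fin 7) (r : ℕ),
        Function.Surjective f ∧
        List.Chain' (· ≤ ·) ((C.support.tail.rotate r).map f) ∧
        (∀ i j : Fin 7, i ≠ j → ∃ u w : V, f u = i ∧ f w = j ∧ M.Adj u w) := by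
  rintro ⟨f, r, hsurj, hchain, hK⟩
  set L := C.support.tail with hL
  set l := L.rotate r with hl
  have hLnd : L.Nodup := hC.isCycle.support_nodup
  have hlnd : l.Nodup := List.nodup_rotate.mpr hLnd
  have hmemL : ∀ x : V, x ∈ L := by
    intro x
    have h1 : x ∈ C.tail.support := hC.isHamiltonian_tail.mem_support x
    rwa [SimpleGraph.Walk.support_tail_of_not_nil C hC.isCycle.not_nil] at h1
  have hmem : ∀ x : V, x ∈ l := fun x => List.mem_rotate.mpr (hmemL x)
  have hlen : l.length = L.length := List.length_rotate _ _
  -- position of each vertex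
  have hpos : ∀ x : V, ∃ (p : ℕ) (hp : p < l.length), l[p] = x := by
    intro x
    obtain ⟨p, hp, he⟩ := List.getElem_of_mem (hmem x)
    exact ⟨p, hp, he⟩
  -- monotonicity of f along l
  have hmono : ∀ (p q : ℕ) (hp : p < l.length) (hq : q < l.length), p ≤ q →
      f (l[p]'hp) ≤ f (l[q]'hq) := by
    have hpw := List.isChain_iff_pairwise.mp hchain
    rw [List.pairwise_iff_getElem] at hpw
    intro p q hp hq hpq
    rcases Nat.lt_or_ge p q with h | h
    · have hp' : p < ((L.rotate r).map f).length := by simpa [hlen] using hp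
      have hq' : q < ((L.rotate r).map f).length := by simpa [hlen] using hq
      have := hpw p q hp' hq' h
      simpa using this
    · have : p = q := by omega
      subst this; exact le_refl _
  -- surjectivity: each value has a position
  have hval : ∀ i : Fin 7, ∃ (p : ℕ) (hp : p < l.length), f l[p] = i := by
    intro i
    obtain ⟨x, hx⟩ := hsurj i
    obtain ⟨p, hp, he⟩ := hpos x
    exact ⟨p, hp, by rw [he, hx]⟩
  have hn7 : 7 ≤ l.length := by
    have h1 : Fintype.card (Fin 7) ≤ Fintype.card V := Fintype.card_le_of_surjective f hsurj
    rw [Fintype.card_fin] at h1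
    have hcard : l.length = Fintype.card V := by
      rw [hlen, hL, List.length_tail, SimpleGraph.Walk.length_support, hC.length_eq]
      omega
    omega
  have hnpos : 0 < l.length := by omega
  -- value of f at endpoints
  have hf0 : (f (l[0]'hnpos) : ℕ) = 0 := by
    obtain ⟨p, hp, he⟩ := hval 0
    have := hmono 0 p hnpos hp (by omega)
    rw [he] at this
    exact Nat.le_zero.mp (by exact_mod_cast this)
  have hf6 : (f (l[l.length - 1]'(by omega)) : ℕ) = 6 := by
    obtain ⟨p, hp, he⟩ := hval 6
    have := hmono p (l.length - 1) hp (by omega) (by omega)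
    rw [he] at this
    have h1 : (6 : ℕ) ≤ (f (l[l.length - 1]'(by omega)) : ℕ) := by exact_mod_cast this
    have h2 : (f (l[l.length - 1]'(by omega)) : ℕ) < 7 := (f _).isLt
    omega
  -- CSucc and f values
  have hsucc_f : ∀ u w : V, CSucc l u w →
      ((f u : ℕ) ≤ (f w : ℕ) ∧ (f w : ℕ) ≤ (f u : ℕ) + 1) ∨
      ((f u : ℕ) = 6 ∧ (f w : ℕ) = 0) := by
    rintro u w ⟨k, hk, hu, hw⟩
    rcases Nat.lt_or_ge (k + 1) l.length with hk1 | hk1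
    · left
      have hidx : (k + 1) % l.length = k + 1 := Nat.mod_eq_of_lt hk1
      have hw' : w = l[k + 1]'hk1 := by
        rw [hw]; exact NoK7Aux.getElem_congr_idx hidx
      constructor
      · have := hmono k (k + 1) hk hk1 (by omega)
        rw [← hu, ← hw'] at this
        exact_mod_cast this
      · by_contra hcon
        push_neg at hcon
        have hfu7 : (f u : ℕ) < 7 := (f u).isLt
        have hfw7 : (f w : ℕ) < 7 := (f w).isLt
        set m : Fin 7 := ⟨(f u : ℕ) + 1, by omega⟩ with hm
        obtain ⟨q, hq, he⟩ := hval m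
        rcases Nat.lt_or_ge k q with h | h
        · -- k + 1 ≤ q : f w ≤ f l[q] = m
          have := hmono (k + 1) q hk1 hq (by omega)
          rw [← hw', he] at this
          have : (f w : ℕ) ≤ (m : ℕ) := by exact_mod_cast this
          simp [hm] at this
          omega
        · have := hmono q k hq hk h
          rw [← hu, he] at this
          have : (m : ℕ) ≤ (f u : ℕ) := by exact_mod_cast this
          simp [hm] at this
    · right
      have hkeq : k = l.length - 1 := by omega
      have hidx : (k + 1) % l.length = 0 := by
        have : k + 1 = l.length := by omega
        rw [this, Nat.mod_self]
      have hu' : u = l[l.length - 1]'(by omega) := by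
        rw [hu]; exact NoK7Aux.getElem_congr_idx hkeq
      have hw' : w = l[0]'hnpos := by
        rw [hw]; exact NoK7Aux.getElem_congr_idx hidx
      rw [hu', hw']
      exact ⟨hf6, hf0⟩
  -- nonconsecutive blocks must be joined by chords
  have Pa : Fin 7 → Prop := fun i => ∃ u ∈ A, f u = i
  have Pb : Fin 7 → Prop := fun i => ∃ u ∈ B, f u = i
  have chordfact : ∀ i j : Fin 7, (i : ℕ) + 1 < (j : ℕ) → ¬((i : ℕ) = 0 ∧ (j : ℕ) = 6) →
      ((∃ u ∈ A, f u = i) ∧ (∃ u ∈ B, f u = j)) ∨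
      ((∃ u ∈ B, f u = i) ∧ (∃ u ∈ A, f u = j)) := by
    intro i j hij hij6
    obtain ⟨u, w, hfu, hfw, hadj⟩ := hK i j (by
      intro h; rw [h] at hij; omega)
    have hnotedge : s(u, w) ∉ C.edges := by
      intro hedge
      rcases edge_csucc hedge with hs | hs
      · rcases hsucc_f u w (csucc_rotate' r hs) with ⟨h1, h2⟩ | ⟨h1, h2⟩ <;>
          rw [hfu, hfw] at * <;> omega
      · rcases hsucc_f w u (csucc_rotate' r hs) with ⟨h1, h2⟩ | ⟨h1, h2⟩ <;>
          rw [hfu, hfw] at * <;> omega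
    rcases hchord u w hadj hnotedge with ⟨h1, h2⟩ | ⟨h1, h2⟩
    · exact Or.inl ⟨⟨u, h1, hfu⟩, ⟨w, h2, hfw⟩⟩
    · exact Or.inr ⟨⟨u, h1, hfu⟩, ⟨w, h2, hfw⟩⟩
  -- A and B are nonempty
  have hAne : A.Nonempty := by
    rcases chordfact 0 2 (by norm_num) (by norm_num) with ⟨⟨u, hu, -⟩, -⟩ | ⟨-, ⟨u, hu, -⟩⟩ <;>
      exact ⟨u, hu⟩
  have hBne : B.Nonempty := by
    rcases chordfact 0 2 (by norm_num) (by norm_num) with ⟨-, ⟨u, hu, -⟩⟩ | ⟨⟨u, hu, -⟩, -⟩ <;>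
      exact ⟨u, hu⟩
  -- arc endpoints
  have harc : ∀ (X : Finset V), X.Nonempty →
      (∃ rX : ℕ, ((L.rotate rX).take X.card).toFinset = X) →
      ∃ tX : V, ∀ u w : V, CSucc l u w → u ∈ X → w ∉ X → u = tX := by
    rintro X hXne ⟨rX, hrX⟩
    set lX := L.rotate rX with hlX
    have hlXnd : lX.Nodup := List.nodup_rotate.mpr hLnd
    have hlXlen : lX.length = L.length := List.length_rotate _ _
    have hcard : X.card ≤ lX.length := by
      have h1 : X.card ≤ (lX.take X.card).length := by
        conv_lhs => rw [← hrX]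
        exact List.toFinset_card_le _
      rw [List.length_take] at h1
      omega
    have hXpos : 0 < X.card := Finset.card_pos.mpr hXne
    refine ⟨lX[X.card - 1]'(by omega), ?_⟩
    intro u w hsucc huX hwX
    have hsuccX : CSucc lX u w := csucc_rotate' rX (csucc_rotate hsucc)
    obtain ⟨k, hk, hu, hw⟩ := hsuccX
    have hmemiff : ∀ (p : ℕ) (hp : p < lX.length), lX[p] ∈ X ↔ p < X.card := by
      intro p hp
      have h0 := getElem_mem_take_iff hlXnd (a := X.card) hp
      have h1 : lX[p] ∈ X ↔ lX[p] ∈ lX.take X.card := by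
        conv_lhs => rw [← hrX]
        exact List.mem_toFinset
      rw [h1, h0]
    have hklt : k < X.card := by
      rw [hu] at huX
      exact (hmemiff k hk).mp huX
    have hknot : ¬ ((k + 1) % lX.length < X.card) := by
      intro hcon
      apply hwX
      rw [hw]
      exact (hmemiff _ _).mpr hcon
    have hkeq : k = X.card - 1 := by
      rcases Nat.lt_or_ge (k + 1) X.card with h | h
      · exfalso
        apply hknot
        rw [Nat.mod_eq_of_lt (by omega)]
        exact h
      · omega
    rw [hu]
    exact NoK7Aux.getElem_congr_idx hkeq
  obtain ⟨tA, htA⟩ := harc A hAne hA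
  obtain ⟨tB, htB⟩ := harc B hBne hB
  -- a block meeting X on the left of a non-X point contains tX
  have sideStep : ∀ (X : Finset V) (tX : V),
      (∀ u w : V, CSucc l u w → u ∈ X → w ∉ X → u = tX) →
      ∀ (p q : ℕ) (hp : p < l.length) (hq : q < l.length), p ≤ q →
        (l[p]'hp) ∈ X → (l[q]'hq) ∉ X →
        ∃ (k : ℕ) (hk : k < l.length), p ≤ k ∧ k ≤ q ∧ l[k] = tX := by
    intro X tX harcX p q hp hq hpq hpmem hqn
    have hqe : l[p + (q - p)]'(by omega) = l[q]'hq := NoK7Aux.getElem_congr_idx (by omega)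
    obtain ⟨k, hk1, hk2, hk3, hk4, hk5, hk6⟩ :=
      exit_aux (l := l) (X := fun x => x ∈ X) (q - p) p (by omega)
        hpmem (by rw [hqe]; exact hqn)
    have hsucc : CSucc l (l[k]'hk3) (l[k + 1]'hk4) := by
      refine ⟨k, hk3, rfl, ?_⟩
      exact NoK7Aux.getElem_congr_idx (Nat.mod_eq_of_lt hk4).symm
    have := harcX _ _ hsucc hk5 hk6
    exact ⟨k, hk3, by omega, by omega, this⟩
  -- a block meeting both A and B contains tA or tB
  have bothfact : ∀ i : Fin 7, (∃ u ∈ A, f u = i) → (∃ u ∈ B, f u = i) →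
      f tA = i ∨ f tB = i := by
    rintro i ⟨u, huA, hfu⟩ ⟨w, hwB, hfw⟩
    obtain ⟨p, hp, hep⟩ := hpos u
    obtain ⟨q, hq, heq⟩ := hpos w
    rcases le_or_gt p q with h | h
    · -- walk from u ∈ A to w ∉ A
      have hwA : l[q] ∉ A := by
        rw [heq]
        exact fun hcon => (Finset.disjoint_left.mp hAB hcon) hwB
      obtain ⟨k, hk, hk1, hk2, hk3⟩ := sideStep A tA htA p q hp hq h (by rw [hep]; exact huA) hwA
      left
      have h1 := hmono p k hp hk hk1
      have h2 := hmono k q hk hq hk2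
      rw [hep, hk3] at h1
      rw [heq, hk3] at h2
      rw [hfu] at h1; rw [hfw] at h2
      exact le_antisymm h2 h1
    · have huB : l[p] ∉ B := by
        rw [hep]
        exact fun hcon => (Finset.disjoint_left.mp hAB huA) hcon
      obtain ⟨k, hk, hk1, hk2, hk3⟩ := sideStep B tB htB q p hq hp (by omega)
        (by rw [heq]; exact hwB) huB
      right
      have h1 := hmono q k hq hk hk1
      have h2 := hmono k p hk hp hk2
      rw [heq, hk3] at h1
      rw [hep, hk3] at h2
      rw [hfw] at h1; rw [hfu] at h2
      exact le_antisymm h2 h1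
  -- final combinatorial contradiction
  obtain ⟨i, j, k, ⟨hij, hij6⟩, ⟨hik, hik6⟩, ⟨hjk, hjk6⟩,
      hia, hib, hja, hjb, hka, hkb⟩ := triple_exists (f tA) (f tB)
  have ni : ¬((∃ u ∈ A, f u = i) ∧ (∃ u ∈ B, f u = i)) := by
    rintro ⟨h1, h2⟩
    rcases bothfact i h1 h2 with h | h
    · exact hia h.symm
    · exact hib h.symm
  have nj : ¬((∃ u ∈ A, f u = j) ∧ (∃ u ∈ B, f u = j)) := by
    rintro ⟨h1, h2⟩
    rcases bothfact j h1 h2 with h | h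
    · exact hja h.symm
    · exact hjb h.symm
  have nk : ¬((∃ u ∈ A, f u = k) ∧ (∃ u ∈ B, f u = k)) := by
    rintro ⟨h1, h2⟩
    rcases bothfact k h1 h2 with h | h
    · exact hka h.symm
    · exact hkb h.symm
  have cij := chordfact i j hij hij6
  have cik := chordfact i k hik hik6
  have cjk := chordfact j k hjk hjk6
  rcases cij with ⟨hPai, hPbj⟩ | ⟨hPbi, hPaj⟩
  · rcases cik with ⟨-, hPbk⟩ | ⟨hPbi, -⟩
    · rcases cjk with ⟨hPaj, -⟩ | ⟨-, hPak⟩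
      · exact nj ⟨hPaj, hPbj⟩
      · exact nk ⟨hPak, hPbk⟩
    · exact ni ⟨hPai, hPbi⟩
  · rcases cik with ⟨hPai, -⟩ | ⟨-, hPak⟩
    · exact ni ⟨hPai, hPbi⟩
    · rcases cjk with ⟨-, hPbk⟩ | ⟨hPbj, -⟩
      · exact nk ⟨hPak, hPbk⟩
      · exact nj ⟨hPaj, hPbj⟩
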